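/- Let $q \in (0,1)$. There exists a constant $C$ (depending only on $q$) such that for all integers $1 \le M_1 < M_2$, $\left(M_1^{-1} - M_2^{-1}\right)^{q-1} \sum_{n=M_1}^{M_2} n^{q-2} \le C$. -/

import Mathlib

open scoped BigOperators NNReal

open Real in
/-- Subadditivity of `x ^ p` for `p ∈ [0,1]`: `a^p - b^p ≤ (a-b)^p`. -/
lemma aux_rpow_sub {p a b : ℝ} (hp0 : 0 ≤ p) (hp1 : p ≤ 1) (hb : 0 ≤ b) (hab : b ≤ a) :
    a ^ p - b ^ p ≤ (a - b) ^ p := by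
  have h := NNReal.rpow_add_le_add_rpow (a - b).toNNReal b.toNNReal hp0 hp1
  have h' : ((a - b).toNNReal + b.toNNReal : ℝ≥0) = a.toNNReal := by
    ext
    simp [Real.toNNReal_of_nonneg (sub_nonneg.2 hab), Real.toNNReal_of_nonneg hb,
      Real.toNNReal_of_nonneg (hb.trans hab)]
  rw [h'] at h
  have h2 : (a.toNNReal : ℝ) ^ p ≤ ((a - b).toNNReal : ℝ) ^ p + (b.toNNReal : ℝ) ^ p := by
    rw [← NNReal.coe_rpow, ← NNReal.coe_rpow, ← NNReal.coe_rpow, ← NNReal.coe_add]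
    exact_mod_cast h
  rw [Real.coe_toNNReal _ (hb.trans hab), Real.coe_toNNReal _ (sub_nonneg.2 hab),
    Real.coe_toNNReal _ hb] at h2
  linarith

/-- Telescoping sum over `Icc`. -/
lemma aux_tele (f : ℕ → ℝ) (M₁ : ℕ) : ∀ M₂, M₁ ≤ M₂ →
    ∑ n ∈ Finset.Icc M₁ M₂, (f n - f (n + 1)) = f M₁ - f (M₂ + 1) := by
  intro M₂ h
  induction M₂, h using Nat.le_induction with
  | base => simp
  | succ k hk ih =>
      rw [Finset.sum_Icc_succ_top (by omega), ih]
      ring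

/-- The key pointwise estimate. -/
lemma aux_key (q : ℝ) (hq0 : 0 < q) (hq1 : q < 1) :
    ∃ c : ℝ, 0 < c ∧ ∀ x : ℝ, 1 ≤ x →
      c * x ^ (q - 2) ≤ x ^ (q - 1) - (x + 1) ^ (q - 1) := by
  set p : ℝ := 1 - q with hp
  have hp0 : 0 < p := by simp [hp]; linarith
  have hp1 : p ≤ 1 := by simp [hp]; linarith
  have h2p : (1 : ℝ) < (2 : ℝ) ^ p := by
    have := Real.one_lt_rpow_iff_of_pos (x := 2) (by norm_num) (y := p)
    simp [this, hp0]
  refine ⟨((2:ℝ) ^ p - 1) / 2, by linarith, ?_⟩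
  intro x hx
  have hx0 : (0 : ℝ) < x := by linarith
  have hx10 : (0 : ℝ) < x + 1 := by linarith
  have ht : 1 / x ≤ 1 := by
    rw [div_le_one hx0]; exact hx
  -- concavity: (1 + t)^p ≥ 1 + (2^p - 1) t with t = 1/x
  have hconc : 1 + ((2:ℝ) ^ p - 1) * (1 / x) ≤ (1 + 1 / x) ^ p := by
    have hcc := (Real.concaveOn_rpow hp0.le hp1).2
      (show (1:ℝ) ∈ Set.Ici (0:ℝ) by norm_num)
      (show (2:ℝ) ∈ Set.Ici (0:ℝ) by norm_num)
      (show (0:ℝ) ≤ 1 - 1 / x by linarith)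
      (show (0:ℝ) ≤ 1 / x by positivity) (by ring)
    simp only [smul_eq_mul] at hcc
    rw [Real.one_rpow, show ((1:ℝ) - 1 / x) * 1 + 1 / x * 2 = 1 + 1 / x by ring] at hcc
    calc 1 + ((2:ℝ) ^ p - 1) * (1 / x) = (1 - 1 / x) * 1 + 1 / x * (2:ℝ) ^ p := by ring
      _ ≤ (1 + 1 / x) ^ p := hcc
  -- (x+1)^p ≥ x^p + (2^p - 1) x^(p-1)
  have hxp : (0:ℝ) < x ^ p := Real.rpow_pos_of_pos hx0 p
  have hx1p : (0:ℝ) < (x + 1) ^ p := Real.rpow_pos_of_pos hx10 p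
  have hmul : x ^ p * (1 + 1 / x) ^ p = (x + 1) ^ p := by
    rw [← Real.mul_rpow hx0.le (by positivity)]
    congr 1
    field_simp
  have hlow : x ^ p + ((2:ℝ) ^ p - 1) * x ^ (p - 1) ≤ (x + 1) ^ p := by
    rw [← hmul]
    have : x ^ p * (1 + ((2:ℝ) ^ p - 1) * (1 / x)) ≤ x ^ p * (1 + 1 / x) ^ p :=
      mul_le_mul_of_nonneg_left hconc hxp.le
    have hsplit : x ^ (p - 1) = x ^ p * (1 / x) := by
      rw [Real.rpow_sub hx0, Real.rpow_one, div_eq_mul_inv, one_div]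
    calc x ^ p + ((2:ℝ) ^ p - 1) * x ^ (p - 1)
        = x ^ p * (1 + ((2:ℝ) ^ p - 1) * (1 / x)) := by rw [hsplit]; ring
      _ ≤ x ^ p * (1 + 1 / x) ^ p := this
  -- (x+1)^p ≤ 2^p x^p ≤ 2 x^p
  have hup : (x + 1) ^ p ≤ 2 * x ^ p := by
    have h1 : (x + 1) ^ p ≤ (2 * x) ^ p :=
      Real.rpow_le_rpow hx10.le (by linarith) hp0.le
    have h2 : (2 * x) ^ p = (2:ℝ) ^ p * x ^ p := Real.mul_rpow (by norm_num) hx0.le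
    have h3 : (2:ℝ) ^ p ≤ 2 := by
      calc (2:ℝ) ^ p ≤ (2:ℝ) ^ (1:ℝ) := Real.rpow_le_rpow_of_exponent_le (by norm_num) hp1
        _ = 2 := Real.rpow_one 2
    nlinarith
  -- now divide
  have hexp : q - 1 + p = 0 := by rw [hp]; ring
  have hq1' : x ^ (q - 1) = 1 / x ^ p := by
    rw [eq_div_iff hxp.ne', ← Real.rpow_add hx0, hexp, Real.rpow_zero]
  have hq1'' : (x + 1) ^ (q - 1) = 1 / (x + 1) ^ p := by
    rw [eq_div_iff hx1p.ne', ← Real.rpow_add hx10, hexp, Real.rpow_zero]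
  rw [hq1', hq1'']
  rw [div_sub_div _ _ hxp.ne' hx1p.ne', one_mul, mul_one, le_div_iff₀ (by positivity)]
  -- goal: c * x^(q-2) * (x^p * (x+1)^p) ≤ (x+1)^p - x^p
  have hq2 : x ^ (q - 2) * x ^ p = x ^ (-1 : ℝ) := by
    rw [← Real.rpow_add hx0]; congr 1; rw [hp]; ring
  have hxm1 : x ^ (p - 1) = x ^ (-1:ℝ) * x ^ p := by
    rw [← Real.rpow_add hx0]; congr 1; ring
  calc ((2:ℝ) ^ p - 1) / 2 * x ^ (q - 2) * (x ^ p * (x + 1) ^ p)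
      ≤ ((2:ℝ) ^ p - 1) / 2 * x ^ (q - 2) * (x ^ p * (2 * x ^ p)) := by
        have hnn : 0 ≤ ((2:ℝ) ^ p - 1) / 2 * x ^ (q - 2) * x ^ p :=
          mul_nonneg (mul_nonneg (by linarith) (Real.rpow_nonneg hx0.le _))
            (Real.rpow_nonneg hx0.le _)
        calc ((2:ℝ) ^ p - 1) / 2 * x ^ (q - 2) * (x ^ p * (x + 1) ^ p)
            = (((2:ℝ) ^ p - 1) / 2 * x ^ (q - 2) * x ^ p) * (x + 1) ^ p := by ring
          _ ≤ (((2:ℝ) ^ p - 1) / 2 * x ^ (q - 2) * x ^ p) * (2 * x ^ p) :=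
              mul_le_mul_of_nonneg_left hup hnn
          _ = ((2:ℝ) ^ p - 1) / 2 * x ^ (q - 2) * (x ^ p * (2 * x ^ p)) := by ring
    _ = ((2:ℝ) ^ p - 1) * (x ^ (-1:ℝ) * x ^ p) := by
        rw [show ((2:ℝ) ^ p - 1) / 2 * x ^ (q - 2) * (x ^ p * (2 * x ^ p))
            = ((2:ℝ) ^ p - 1) * ((x ^ (q-2) * x ^ p) * x ^ p) by ring, hq2]
    _ = ((2:ℝ) ^ p - 1) * x ^ (p - 1) := by rw [hxm1]
    _ ≤ (x + 1) ^ p - x ^ p := by linarith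

theorem stmt_9 (q : ℝ) (hq0 : 0 < q) (hq1 : q < 1) :
    ∃ C : ℝ, ∀ M₁ M₂ : ℕ, 1 ≤ M₁ → M₁ < M₂ →
      ((M₁ : ℝ)⁻¹ - (M₂ : ℝ)⁻¹) ^ (q - 1) *
          (∑ n ∈ Finset.Icc M₁ M₂, ((n : ℝ) ^ (q - 2))) ≤ C := by
  obtain ⟨c, hc, hkey⟩ := aux_key q hq0 hq1
  refine ⟨2 / c, ?_⟩
  intro M₁ M₂ hM₁ hM₁₂
  have hM₁0 : (0:ℝ) < (M₁ : ℝ) := by exact_mod_cast Nat.pos_of_ne_zero (by omega)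
  have hM₂0 : (0:ℝ) < (M₂ : ℝ) := by exact_mod_cast Nat.pos_of_ne_zero (by omega)
  have hM₁₂' : (M₁ : ℝ) < (M₂ : ℝ) := by exact_mod_cast hM₁₂
  set D : ℝ := (M₁ : ℝ)⁻¹ - (M₂ : ℝ)⁻¹ with hD
  have hD0 : 0 < D := by
    rw [hD, sub_pos]
    exact inv_strictAnti₀ hM₁0 hM₁₂'
  -- sum bound via telescoping
  have hsum : ∑ n ∈ Finset.Icc M₁ M₂, ((n : ℝ) ^ (q - 2))
      ≤ c⁻¹ * ((M₁ : ℝ) ^ (q - 1) - ((M₂ : ℝ) + 1) ^ (q - 1)) := by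
    have h1 : ∑ n ∈ Finset.Icc M₁ M₂, ((n : ℝ) ^ (q - 2))
        ≤ ∑ n ∈ Finset.Icc M₁ M₂, c⁻¹ * ((n : ℝ) ^ (q - 1) - (((n : ℕ) + 1 : ℕ) : ℝ) ^ (q - 1)) := by
      apply Finset.sum_le_sum
      intro n hn
      have hn1 : 1 ≤ n := le_trans hM₁ (Finset.mem_Icc.1 hn).1
      have hx : (1:ℝ) ≤ (n:ℝ) := by exact_mod_cast hn1
      have := hkey (n : ℝ) hx
      push_cast
      calc (n:ℝ) ^ (q - 2) = c⁻¹ * (c * (n:ℝ) ^ (q - 2)) := by field_simp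
        _ ≤ c⁻¹ * ((n:ℝ) ^ (q - 1) - ((n:ℝ) + 1) ^ (q - 1)) :=
            mul_le_mul_of_nonneg_left this (inv_nonneg.2 hc.le)
    rw [← Finset.mul_sum] at h1
    rw [aux_tele (fun n => ((n : ℕ) : ℝ) ^ (q - 1)) M₁ M₂ hM₁₂.le] at h1
    simp only [Nat.cast_add, Nat.cast_one] at h1
    exact h1
  -- head bound: M₁^(q-1) - (M₂+1)^(q-1) ≤ 2 D^(1-q)
  have inv_flip : ∀ x : ℝ, 0 < x → (x⁻¹) ^ (1 - q) = x ^ (q - 1) := by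
    intro x hx
    rw [← Real.rpow_neg_one x, ← Real.rpow_mul hx.le]
    congr 1
    ring
  have hhead : (M₁ : ℝ) ^ (q - 1) - ((M₂ : ℝ) + 1) ^ (q - 1) ≤ 2 * D ^ (1 - q) := by
    set a : ℝ := (M₁ : ℝ) with hA
    set b : ℝ := (M₂ : ℝ) with hB
    have ha1 : (1:ℝ) ≤ a := by rw [hA]; exact_mod_cast hM₁
    have hb1 : a + 1 ≤ b := by
      rw [hA, hB]
      exact_mod_cast hM₁₂
    have ha0 : (0:ℝ) < a := hM₁0
    have hb0 : (0:ℝ) < b := hM₂0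
    have hb10 : (0:ℝ) < b + 1 := by linarith
    -- step 1: a⁻¹ - (b+1)⁻¹ ≤ 2 * D
    have e1 : b⁻¹ - (b + 1)⁻¹ = (b * (b + 1))⁻¹ := by
      field_simp
      ring
    have e2 : a⁻¹ - b⁻¹ - (a * b)⁻¹ = (b - a - 1) / (a * b) := by
      field_simp
    have h1 : (b * (b + 1))⁻¹ ≤ (a * b)⁻¹ := by
      apply inv_anti₀ (by positivity)
      nlinarith
    have h2 : (a * b)⁻¹ ≤ a⁻¹ - b⁻¹ := by
      have : (0:ℝ) ≤ (b - a - 1) / (a * b) := div_nonneg (by linarith) (by positivity)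
      linarith [e2]
    have hstep1 : a⁻¹ - (b + 1)⁻¹ ≤ 2 * D := by
      have : a⁻¹ - (b + 1)⁻¹ = (a⁻¹ - b⁻¹) + (b⁻¹ - (b + 1)⁻¹) := by ring
      rw [this, hD]
      rw [e1]
      have : (b * (b + 1))⁻¹ ≤ a⁻¹ - b⁻¹ := le_trans h1 h2
      rw [hA, hB] at *
      linarith
    -- step 2: subadditivity
    have hba : (b + 1)⁻¹ ≤ a⁻¹ := by
      apply inv_anti₀ ha0
      linarith
    have hsub : a⁻¹ ^ (1 - q) - (b + 1)⁻¹ ^ (1 - q) ≤ (a⁻¹ - (b + 1)⁻¹) ^ (1 - q) :=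
      aux_rpow_sub (by linarith) (by linarith) (by positivity) hba
    have hmono : (a⁻¹ - (b + 1)⁻¹) ^ (1 - q) ≤ (2 * D) ^ (1 - q) := by
      exact Real.rpow_le_rpow (sub_nonneg.2 hba) hstep1 (by linarith)
    have h2D : (2 * D) ^ (1 - q) ≤ 2 * D ^ (1 - q) := by
      rw [Real.mul_rpow (by norm_num) hD0.le]
      have h3 : (2:ℝ) ^ (1 - q) ≤ 2 := by
        calc (2:ℝ) ^ (1 - q) ≤ (2:ℝ) ^ (1:ℝ) :=
              Real.rpow_le_rpow_of_exponent_le (by norm_num) (by linarith)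
          _ = 2 := Real.rpow_one 2
      have := Real.rpow_nonneg hD0.le (1 - q)
      nlinarith
    have hfa := inv_flip a ha0
    have hfb := inv_flip (b + 1) hb10
    calc a ^ (q - 1) - (b + 1) ^ (q - 1)
        = a⁻¹ ^ (1 - q) - (b + 1)⁻¹ ^ (1 - q) := by rw [hfa, hfb]
      _ ≤ (a⁻¹ - (b + 1)⁻¹) ^ (1 - q) := hsub
      _ ≤ (2 * D) ^ (1 - q) := hmono
      _ ≤ 2 * D ^ (1 - q) := h2D
  -- assemble
  have hDq : (0:ℝ) ≤ D ^ (q - 1) := Real.rpow_nonneg hD0.le _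
  have hone : D ^ (q - 1) * D ^ (1 - q) = 1 := by
    rw [← Real.rpow_add hD0]
    norm_num
  calc D ^ (q - 1) * ∑ n ∈ Finset.Icc M₁ M₂, ((n : ℝ) ^ (q - 2))
      ≤ D ^ (q - 1) * (c⁻¹ * ((M₁ : ℝ) ^ (q - 1) - ((M₂ : ℝ) + 1) ^ (q - 1))) :=
        mul_le_mul_of_nonneg_left hsum hDq
    _ ≤ D ^ (q - 1) * (c⁻¹ * (2 * D ^ (1 - q))) := by
        apply mul_le_mul_of_nonneg_left _ hDq
        apply mul_le_mul_of_nonneg_left hhead (by positivity)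
    _ = 2 / c * (D ^ (q - 1) * D ^ (1 - q)) := by ring
    _ = 2 / c := by rw [hone, mul_one]
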